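/- With notation as in the Monod construction (G free on infinite S, H = ℓ²(G), T_n the partial shift operator associated to n generators S_n, λ the left regular representation): if β ∈ B(H) commutes with λ(g) for all g ∈ G, then ‖T_n − β‖ ≥ 2n / (2√(2n−1) + √(2n)) > √(2n)/3. Consequently the distance from T_n to the commutant of λ(G) tends to infinity with n. -/

import Mathlib

open scoped ENNReal NNReal

namespace Stmt17
variable {S : Type*} [DecidableEq S]

theorem toWord_single_mul (s : S) (b : Bool) (z : FreeGroup S) :
    (FreeGroup.mk [(s,b)] * z).toWord =
      if z.toWord.head? = some (s, !b) then z.toWord.tail else (s,b) :: z.toWord := by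
  conv_lhs => rw [← FreeGroup.mk_toWord (x := z)]
  rw [FreeGroup.mul_mk, FreeGroup.toWord_mk]
  show FreeGroup.reduce ((s,b) :: z.toWord) = _
  rw [FreeGroup.reduce.cons, FreeGroup.reduce_toWord]
  cases h : z.toWord with
  | nil => simp
  | cons hd tl =>
    rcases hd with ⟨t, c⟩
    by_cases hc : s = t ∧ b = !c
    · simp [hc.1, hc.2]
    · have : ¬ ((t, c) = (s, !b)) := by
        rintro ⟨rfl, rfl⟩
        simp at hc
      simp only [if_neg hc]
      simp [this]

end Stmt17

namespace Stmt17
variable {S : Type*} [DecidableEq S]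

/-- length dichotomy -/
theorem len_single_mul (s : S) (b : Bool) (z : FreeGroup S) :
    (z.toWord.head? = some (s, !b) ∧
        (FreeGroup.mk [(s,b)] * z).toWord.length + 1 = z.toWord.length) ∨
      (z.toWord.head? ≠ some (s, !b) ∧
        (FreeGroup.mk [(s,b)] * z).toWord.length = z.toWord.length + 1) := by
  rw [toWord_single_mul]
  by_cases h : z.toWord.head? = some (s, !b)
  · left
    refine ⟨h, ?_⟩
    cases hz : z.toWord with
    | nil => rw [hz] at h; simp at h
    | cons hd tl =>
      rw [hz] at h
      simp only [List.head?_cons, Option.some.injEq] at h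
      simp [if_pos h, hz, h]
  · right
    simp [if_neg h, h]

end Stmt17

namespace Stmt17
variable {S : Type*} [DecidableEq S]

def down (g z : FreeGroup S) : Prop := (g * z).toWord.length < z.toWord.length

instance (g z : FreeGroup S) : Decidable (down g z) := by unfold down; infer_instance

def ES (Sn : Finset S) : Finset (FreeGroup S) :=
  (Sn ×ˢ (Finset.univ : Finset Bool)).image (fun p => FreeGroup.mk [p])

theorem toWord_gen (p : S × Bool) : (FreeGroup.mk [p]).toWord = [p] := by
  rw [FreeGroup.toWord_mk]; exact FreeGroup.reduce_singleton p

theorem gen_injective : Function.Injective (fun p : S × Bool => FreeGroup.mk [p]) := by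
  intro p q h
  have := congrArg FreeGroup.toWord h
  simpa [toWord_gen] using this

theorem card_ES (Sn : Finset S) : (ES Sn).card = 2 * Sn.card := by
  rw [ES, Finset.card_image_of_injective _ gen_injective, Finset.card_product]
  simp [mul_comm]

theorem mem_ES {Sn : Finset S} {g : FreeGroup S} :
    g ∈ ES Sn ↔ ∃ s ∈ Sn, ∃ b : Bool, g = FreeGroup.mk [(s,b)] := by
  simp only [ES, Finset.mem_image, Finset.mem_product, Finset.mem_univ, and_true]
  constructor
  · rintro ⟨⟨s,b⟩, hs, rfl⟩; exact ⟨s, hs, b, rfl⟩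
  · rintro ⟨s, hs, b, rfl⟩; exact ⟨(s,b), hs, rfl⟩

theorem inv_gen (s : S) (b : Bool) :
    (FreeGroup.mk [(s,b)])⁻¹ = FreeGroup.mk [(s, !b)] := by
  rw [FreeGroup.inv_mk]; simp [FreeGroup.invRev]

theorem inv_mem_ES {Sn : Finset S} {g : FreeGroup S} (hg : g ∈ ES Sn) : g⁻¹ ∈ ES Sn := by
  rw [mem_ES] at hg ⊢
  obtain ⟨s, hs, b, rfl⟩ := hg
  exact ⟨s, hs, !b, inv_gen s b⟩

theorem down_head {s : S} {b : Bool} {z : FreeGroup S}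
    (h : down (FreeGroup.mk [(s,b)]) z) : z.toWord.head? = some (s, !b) := by
  rcases len_single_mul s b z with ⟨h1, _⟩ | ⟨_, h2⟩
  · exact h1
  · exact absurd h (by rw [down, h2]; omega)

theorem not_down_len {s : S} {b : Bool} {z : FreeGroup S}
    (h : ¬ down (FreeGroup.mk [(s,b)]) z) :
    (FreeGroup.mk [(s,b)] * z).toWord.length = z.toWord.length + 1 := by
  rcases len_single_mul s b z with ⟨_, h1⟩ | ⟨_, h2⟩
  · exact absurd (by rw [down]; omega) h
  · exact h2

theorem down_unique {Sn : Finset S} {z : FreeGroup S} {g₁ g₂ : FreeGroup S}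
    (h₁ : g₁ ∈ ES Sn) (h₂ : g₂ ∈ ES Sn) (d₁ : down g₁ z) (d₂ : down g₂ z) : g₁ = g₂ := by
  rw [mem_ES] at h₁ h₂
  obtain ⟨s₁, _, b₁, rfl⟩ := h₁
  obtain ⟨s₂, _, b₂, rfl⟩ := h₂
  have e1 := down_head d₁
  have e2 := down_head d₂
  rw [e1] at e2
  apply congrArg (fun p : S × Bool => FreeGroup.mk [p])
  obtain ⟨rfl, hb⟩ := Prod.mk.inj (Option.some.inj e2)
  rw [Bool.not_inj hb]

theorem not_down_inv_down {Sn : Finset S} {z g : FreeGroup S} (hg : g ∈ ES Sn)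
    (h : ¬ down g (g⁻¹ * z)) : down g⁻¹ z := by
  rw [mem_ES] at hg
  obtain ⟨s, _, b, rfl⟩ := hg
  have := not_down_len h
  rw [mul_inv_cancel_left] at this
  rw [down, this]
  omega

end Stmt17

namespace Stmt17
variable {S : Type*} [DecidableEq S]

theorem sum_ite_le {γ : Type*} {E : Finset γ} {P : γ → Prop} [DecidablePred P]
    (hP : (E.filter P).card ≤ 1) {n : ℕ} (hn : 1 ≤ n) (hE : E.card = 2 * n)
    {a : ℝ} (ha : 1 ≤ a) (ha2 : a * a = 2 * n - 1) :
    ∑ g ∈ E, (if P g then a else a⁻¹) ≤ 2 * a := by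
  rw [Finset.sum_ite, Finset.sum_const, Finset.sum_const]
  have hcard := Finset.card_filter_add_card_filter_not (s := E) (p := P)
  set k := (E.filter P).card with hk
  set m := (E.filter fun a => ¬ P a).card with hm
  have ha0 : (0:ℝ) < a := lt_of_lt_of_le one_pos ha
  have hinv : a⁻¹ * a = 1 := inv_mul_cancel₀ ha0.ne'
  have hkm : (k:ℝ) + m = 2 * n := by
    rw [hE] at hcard
    exact_mod_cast hcard

  have hk1 : (k:ℝ) ≤ 1 := by exact_mod_cast hP
  have hinv_le : a⁻¹ ≤ a := by
    rw [inv_le_iff_one_le_mul₀ ha0]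
    nlinarith
  have hn' : (1:ℝ) ≤ n := by exact_mod_cast hn
  simp only [nsmul_eq_mul]
  nlinarith [inv_nonneg.mpr ha0.le, mul_le_mul_of_nonneg_left hinv_le (sub_nonneg.mpr hk1)]

theorem sumT {Sn : Finset S} {n : ℕ} (hn : 1 ≤ n) (hSn : Sn.card = n)
    {a : ℝ} (ha : 1 ≤ a) (ha2 : a * a = 2 * n - 1) (z : FreeGroup S) :
    ∑ g ∈ ES Sn, (if down g z then a else a⁻¹) ≤ 2 * a := by
  refine sum_ite_le ?_ hn (by rw [card_ES, hSn]) ha ha2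
  refine Finset.card_le_one.mpr ?_
  intro g₁ h₁ g₂ h₂
  rw [Finset.mem_filter] at h₁ h₂
  exact down_unique h₁.1 h₂.1 h₁.2 h₂.2

theorem sumT' {Sn : Finset S} {n : ℕ} (hn : 1 ≤ n) (hSn : Sn.card = n)
    {a : ℝ} (ha : 1 ≤ a) (ha2 : a * a = 2 * n - 1) (z : FreeGroup S) :
    ∑ g ∈ ES Sn, (if down g (g⁻¹ * z) then a else a⁻¹)⁻¹ ≤ 2 * a := by
  have ha0 : (0:ℝ) < a := lt_of_lt_of_le one_pos ha
  have : ∀ g ∈ ES Sn, (if down g (g⁻¹ * z) then a else a⁻¹)⁻¹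
      = (if ¬ down g (g⁻¹ * z) then a else a⁻¹) := by
    intro g _
    by_cases h : down g (g⁻¹ * z) <;> simp [h, inv_inv]
  rw [Finset.sum_congr rfl this]
  refine sum_ite_le ?_ hn (by rw [card_ES, hSn]) ha ha2
  refine Finset.card_le_one.mpr ?_
  intro g₁ h₁ g₂ h₂
  rw [Finset.mem_filter] at h₁ h₂
  have d₁ := not_down_inv_down h₁.1 h₁.2
  have d₂ := not_down_inv_down h₂.1 h₂.2
  have := down_unique (inv_mem_ES h₁.1) (inv_mem_ES h₂.1) d₁ d₂
  exact inv_injective this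

end Stmt17

namespace Stmt17
variable {S : Type*} [DecidableEq S]

local notation "H" => lp (fun _ : FreeGroup S => ℂ) 2

theorem eval_inner (y : FreeGroup S) (v : H) :
    (innerSL ℂ (lp.single 2 y (1:ℂ))) v = v y := by
  simp only [innerSL_apply_apply]
  rw [lp.inner_single_left]
  simp

theorem pointwise (g : FreeGroup S) (M : H →L[ℂ] H)
    (hM : ∀ x, M (lp.single 2 x 1) = lp.single 2 (g * x) 1)
    (u : H) (y : FreeGroup S) : M u y = u (g⁻¹ * y) := by
  classical
  have hs : HasSum (fun x : FreeGroup S => lp.single 2 x (u x)) u :=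
    lp.hasSum_single (by norm_num) u
  have h2 := hs.mapL ((innerSL ℂ (lp.single 2 y (1:ℂ))).comp M)
  have h3 : (fun x : FreeGroup S =>
      ((innerSL ℂ (lp.single 2 y (1:ℂ))).comp M) (lp.single 2 x (u x)))
      = fun x => if x = g⁻¹ * y then u (g⁻¹ * y) else 0 := by
    funext x
    have hsm : (lp.single 2 x (u x) : H) = u x • (lp.single 2 x (1:ℂ) : H) := by
      rw [← lp.single_smul (E := fun _ : FreeGroup S => ℂ) 2 x (u x) (1:ℂ), smul_eq_mul, mul_one]
    rw [ContinuousLinearMap.comp_apply, hsm, map_smul, map_smul, hM, eval_inner]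
    by_cases h : x = g⁻¹ * y
    · have : g * x = y := by rw [h, mul_inv_cancel_left]
      rw [if_pos h, ← h]
      simp [this, lp.single_apply_self]
    · have : y ≠ g * x := by
        intro hy
        exact h (by rw [hy, inv_mul_cancel_left])
      rw [if_neg h, lp.single_apply_ne _ _ _ this]
      simp
  rw [h3] at h2
  have h4 : ((innerSL ℂ (lp.single 2 y (1:ℂ))).comp M) u = M u y := by
    rw [ContinuousLinearMap.comp_apply, eval_inner]
  rw [← h4]
  exact (h2.unique (hasSum_ite_eq (g⁻¹ * y) (u (g⁻¹ * y)))).symm ▸ rfl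

end Stmt17

namespace Stmt17
variable {S : Type*} [DecidableEq S]

local notation "H" => lp (fun _ : FreeGroup S => ℂ) 2

theorem amgm {x y r : ℝ} (hr : 0 < r) (hx : 0 ≤ x) (hy : 0 ≤ y) :
    x * y ≤ (r * x^2 + r⁻¹ * y^2) / 2 := by
  have key : r * x^2 + r⁻¹ * y^2 - 2*(x*y) = (r*x - y)^2 / r := by
    field_simp
    ring
  nlinarith [div_nonneg (sq_nonneg (r*x - y)) hr.le]

theorem hasSum_norm_sq (f : H) : HasSum (fun y => ‖f y‖^2) (‖f‖^2) := by
  have h : HasSum (fun y : FreeGroup S => ‖f y‖ ^ (2:ℝ≥0∞).toReal) (‖f‖ ^ (2:ℝ≥0∞).toReal) :=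
    lp.hasSum_norm (by norm_num) f
  have h2 : ((2:ℝ≥0∞)).toReal = (2:ℝ) := by norm_num
  rw [h2] at h
  simpa [Real.rpow_two] using h

theorem kesten {Sn : Finset S} {n : ℕ} (hn : 1 ≤ n) (hSn : Sn.card = n)
    (u w : H) (hw : ∀ y, w y = ∑ g ∈ ES Sn, u (g⁻¹ * y)) :
    ‖w‖ ≤ 2 * Real.sqrt (2*n - 1) * ‖u‖ := by
  classical
  set a : ℝ := Real.sqrt (2*n - 1) with ha_def
  have hn' : (1:ℝ) ≤ (n:ℝ) := by exact_mod_cast hn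
  have h2n : (1:ℝ) ≤ 2*(n:ℝ) - 1 := by linarith
  have ha2 : a * a = 2*(n:ℝ) - 1 := Real.mul_self_sqrt (by linarith)
  have ha : 1 ≤ a := by
    nlinarith [Real.sqrt_nonneg (2*(n:ℝ) - 1)]
  have ha0 : (0:ℝ) < a := lt_of_lt_of_le one_pos ha
  by_cases hu : ‖u‖ = 0
  · have hu0 : u = 0 := norm_eq_zero.mp hu
    have hw0 : w = 0 := by
      ext y
      rw [hw y, hu0]
      simp
    rw [hw0, hu]
    simp
  by_cases hwn : ‖w‖ = 0
  · rw [hwn]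
    positivity
  have hu0 : (0:ℝ) < ‖u‖ := lt_of_le_of_ne (norm_nonneg u) (Ne.symm hu)
  have hw0 : (0:ℝ) < ‖w‖ := lt_of_le_of_ne (norm_nonneg w) (Ne.symm hwn)
  set c : ℝ := ‖w‖ / ‖u‖ with hc_def
  have hc0 : 0 < c := div_pos hw0 hu0
  set t : FreeGroup S → FreeGroup S → ℝ := fun g z => if down g z then a else a⁻¹ with ht_def
  have ht_pos : ∀ g z, 0 < t g z := by
    intro g z
    by_cases h : down g z <;> simp [ht_def, h, ha0, inv_pos]
  have ht_le : ∀ g z, t g z ≤ a := by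
    intro g z
    have hinv : a⁻¹ ≤ a := by
      rw [inv_le_iff_one_le_mul₀ ha0]
      nlinarith
    by_cases h : down g z <;> simp [ht_def, h, hinv]
  have htinv_le : ∀ g z, (t g z)⁻¹ ≤ a := by
    intro g z
    have hinv : a⁻¹ ≤ a := by
      rw [inv_le_iff_one_le_mul₀ ha0]
      nlinarith
    by_cases h : down g z <;> simp [ht_def, h, hinv]
  -- summability facts
  have hsu := hasSum_norm_sq u
  have hsw := hasSum_norm_sq w
  have s_u : Summable (fun z => ‖u z‖^2) := hsu.summable
  have s_w : Summable (fun y => ‖w y‖^2) := hsw.summable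
  have s_ushift : ∀ g : FreeGroup S, Summable (fun y => ‖u (g⁻¹ * y)‖^2) := by
    intro g
    exact ((Equiv.mulLeft (g⁻¹ : FreeGroup S)).summable_iff
      (f := fun z : FreeGroup S => ‖u z‖^2)).mpr s_u
  have s_P : ∀ g : FreeGroup S, Summable (fun z => t g z * ‖u z‖^2) := by
    intro g
    refine Summable.of_nonneg_of_le (fun z => mul_nonneg (ht_pos g z).le (sq_nonneg _))
      (fun z => ?_) (s_u.mul_left a)
    exact mul_le_mul_of_nonneg_right (ht_le g z) (sq_nonneg _)
  have s_P' : ∀ g : FreeGroup S, Summable (fun y => t g (g⁻¹ * y) * ‖u (g⁻¹ * y)‖^2) := by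
    intro g
    exact ((Equiv.mulLeft (g⁻¹ : FreeGroup S)).summable_iff
      (f := fun z : FreeGroup S => t g z * ‖u z‖^2)).mpr (s_P g)
  have s_Q : ∀ g : FreeGroup S, Summable (fun y => (t g (g⁻¹ * y))⁻¹ * ‖w y‖^2) := by
    intro g
    refine Summable.of_nonneg_of_le
      (fun y => mul_nonneg (inv_nonneg.mpr (ht_pos g (g⁻¹*y)).le) (sq_nonneg _))
      (fun y => ?_) (s_w.mul_left a)
    exact mul_le_mul_of_nonneg_right (htinv_le g (g⁻¹ * y)) (sq_nonneg _)
  -- the majorant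
  set m : FreeGroup S → ℝ := fun y =>
    (c/2) * ∑ g ∈ ES Sn, t g (g⁻¹ * y) * ‖u (g⁻¹ * y)‖^2 +
    (1/(2*c)) * ∑ g ∈ ES Sn, (t g (g⁻¹ * y))⁻¹ * ‖w y‖^2 with hm_def
  have s_m : Summable m := by
    refine Summable.add ?_ ?_
    · exact (summable_sum (fun g _ => s_P' g)).mul_left _
    · exact (summable_sum (fun g _ => s_Q g)).mul_left _
  -- pointwise bound
  have hpoint : ∀ y, ‖w y‖^2 ≤ m y := by
    intro y
    have h1 : ‖w y‖ ≤ ∑ g ∈ ES Sn, ‖u (g⁻¹ * y)‖ := by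
      rw [hw y]
      exact norm_sum_le _ _
    have h2 : ‖w y‖^2 ≤ ∑ g ∈ ES Sn, ‖u (g⁻¹ * y)‖ * ‖w y‖ := by
      rw [← Finset.sum_mul]
      calc ‖w y‖^2 = ‖w y‖ * ‖w y‖ := sq (‖w y‖) ▸ (sq (‖w y‖)).symm ▸ (sq (‖w y‖)).symm ▸ rfl
        _ ≤ _ := mul_le_mul_of_nonneg_right h1 (norm_nonneg _)
    refine h2.trans ?_
    rw [hm_def]
    simp only [Finset.mul_sum, ← Finset.sum_add_distrib]
    refine Finset.sum_le_sum (fun g _ => ?_)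
    have := amgm (r := t g (g⁻¹ * y) * c) (mul_pos (ht_pos g _) hc0)
      (norm_nonneg (u (g⁻¹ * y))) (norm_nonneg (w y))
    calc ‖u (g⁻¹ * y)‖ * ‖w y‖
        ≤ ((t g (g⁻¹*y) * c) * ‖u (g⁻¹*y)‖^2 + (t g (g⁻¹*y) * c)⁻¹ * ‖w y‖^2) / 2 := this
      _ = c/2 * (t g (g⁻¹*y) * ‖u (g⁻¹*y)‖^2) + 1/(2*c) * ((t g (g⁻¹*y))⁻¹ * ‖w y‖^2) := by
          rw [mul_inv]
          field_simp
  -- sum the majorant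
  have key : ‖w‖^2 ≤ (c/2) * (2*a*‖u‖^2) + (1/(2*c)) * (2*a*‖w‖^2) := by
    have hstep : ‖w‖^2 ≤ ∑' y, m y := by
      rw [← hsw.tsum_eq]
      exact Summable.tsum_le_tsum hpoint s_w s_m
    refine hstep.trans ?_
    rw [hm_def]
    have e1 : ∑' y, ((c/2) * ∑ g ∈ ES Sn, t g (g⁻¹ * y) * ‖u (g⁻¹ * y)‖^2 +
        (1/(2*c)) * ∑ g ∈ ES Sn, (t g (g⁻¹ * y))⁻¹ * ‖w y‖^2)
        = (c/2) * ∑' y, (∑ g ∈ ES Sn, t g (g⁻¹ * y) * ‖u (g⁻¹ * y)‖^2) +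
          (1/(2*c)) * ∑' y, (∑ g ∈ ES Sn, (t g (g⁻¹ * y))⁻¹ * ‖w y‖^2) := by
      rw [Summable.tsum_add (((summable_sum (fun g _ => s_P' g)).mul_left _))
        (((summable_sum (fun g _ => s_Q g)).mul_left _)), tsum_mul_left, tsum_mul_left]
    rw [e1]
    have hPart1 : ∑' y, (∑ g ∈ ES Sn, t g (g⁻¹ * y) * ‖u (g⁻¹ * y)‖^2) ≤ 2*a*‖u‖^2 := by
      rw [Summable.tsum_finsetSum (fun g _ => s_P' g)]
      have hre : ∀ g ∈ ES Sn, ∑' y, t g (g⁻¹ * y) * ‖u (g⁻¹ * y)‖^2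
          = ∑' z, t g z * ‖u z‖^2 := by
        intro g _
        exact Equiv.tsum_eq (Equiv.mulLeft g⁻¹) (fun z => t g z * ‖u z‖^2)
      rw [Finset.sum_congr rfl hre, ← Summable.tsum_finsetSum (fun g _ => s_P g)]
      have hb : ∀ z, ∑ g ∈ ES Sn, t g z * ‖u z‖^2 ≤ (2*a) * ‖u z‖^2 := by
        intro z
        rw [← Finset.sum_mul]
        exact mul_le_mul_of_nonneg_right (sumT hn hSn ha ha2 z) (sq_nonneg _)
      calc ∑' z, ∑ g ∈ ES Sn, t g z * ‖u z‖^2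
          ≤ ∑' z, (2*a) * ‖u z‖^2 :=
            Summable.tsum_le_tsum hb (summable_sum (fun g _ => s_P g)) (s_u.mul_left _)
        _ = (2*a) * ∑' z, ‖u z‖^2 := tsum_mul_left
        _ = 2*a*‖u‖^2 := by rw [hsu.tsum_eq]
    have hPart2 : ∑' y, (∑ g ∈ ES Sn, (t g (g⁻¹ * y))⁻¹ * ‖w y‖^2) ≤ 2*a*‖w‖^2 := by
      have hb : ∀ y, ∑ g ∈ ES Sn, (t g (g⁻¹ * y))⁻¹ * ‖w y‖^2 ≤ (2*a) * ‖w y‖^2 := by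
        intro y
        rw [← Finset.sum_mul]
        refine mul_le_mul_of_nonneg_right ?_ (sq_nonneg _)
        have := sumT' hn hSn ha ha2 y
        simpa [ht_def] using this
      calc ∑' y, ∑ g ∈ ES Sn, (t g (g⁻¹ * y))⁻¹ * ‖w y‖^2
          ≤ ∑' y, (2*a) * ‖w y‖^2 :=
            Summable.tsum_le_tsum hb (summable_sum (fun g _ => s_Q g)) (s_w.mul_left _)
        _ = (2*a) * ∑' y, ‖w y‖^2 := tsum_mul_left
        _ = 2*a*‖w‖^2 := by rw [hsw.tsum_eq]
    have c2 : (0:ℝ) ≤ c/2 := by positivity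
    have c3 : (0:ℝ) ≤ 1/(2*c) := by positivity
    exact add_le_add (mul_le_mul_of_nonneg_left hPart1 c2)
      (mul_le_mul_of_nonneg_left hPart2 c3)
  -- conclude
  have hfinal : ‖w‖^2 ≤ (2*a*‖u‖) * ‖w‖ := by
    have e2 : (c/2) * (2*a*‖u‖^2) + (1/(2*c)) * (2*a*‖w‖^2) = (2*a*‖u‖) * ‖w‖ := by
      rw [hc_def]
      field_simp
      ring
    rw [← e2]
    exact key
  nlinarith [hw0]

end Stmt17

namespace Stmt17
variable {S : Type*} [DecidableEq S]

local notation "H" => lp (fun _ : FreeGroup S => ℂ) 2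

theorem delta_norm (x : FreeGroup S) : ‖(lp.single 2 x 1 : H)‖ = 1 := by
  have := lp.norm_single (p := 2) (E := fun _ : FreeGroup S => ℂ) (by norm_num)
    x (1:ℂ)
  simpa using this

theorem coeFn_sum_apply {γ : Type*} (s : Finset γ) (v : γ → H) (y : FreeGroup S) :
    (∑ g ∈ s, v g) y = ∑ g ∈ s, v g y := by
  have h1 := eval_inner y (∑ g ∈ s, v g)
  rw [← h1, map_sum]
  exact Finset.sum_congr rfl (fun g _ => eval_inner y (v g))

theorem norm_f {Sn : Finset S} {n : ℕ} (hn : 1 ≤ n) (hSn : Sn.card = n) :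
    ‖(∑ g ∈ ES Sn, lp.single 2 g (1:ℂ) : H)‖ = Real.sqrt (2*n) := by
  have h := lp.norm_sum_single (p := 2) (E := fun _ : FreeGroup S => ℂ) (by norm_num)
    (fun _ => (1:ℂ)) (ES Sn)
  have h2 : ((2:ℝ≥0∞)).toReal = (2:ℝ) := by norm_num
  rw [h2] at h
  simp only [norm_one, Real.one_rpow, Finset.sum_const, nsmul_eq_mul, mul_one] at h
  rw [card_ES, hSn] at h
  have hcast : (((2*n : ℕ)):ℝ) = 2*(n:ℝ) := by push_cast; ring
  rw [hcast] at h
  have h3 : ‖(∑ g ∈ ES Sn, lp.single 2 g (1:ℂ) : H)‖^2 = 2*(n:ℝ) := by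
    rw [← h, Real.rpow_two]
  rw [← h3]
  exact (Real.sqrt_sq (norm_nonneg _)).symm

end Stmt17

open Stmt17




/-- Monod: With `G` free on an infinite set `S`, `H = ℓ²(G)`,
`λ` the left regular representation and `T_n` the partial shift operator
associated to `n` generators `S_n`: if `β ∈ B(H)` commutes with every `λ(g)`,
then `‖T_n − β‖ ≥ 2n/(2√(2n−1) + √(2n)) > √(2n)/3`; hence the distance from
`T_n` to the commutant of `λ(G)` tends to infinity with `n`. -/
theorem stmt17 {S : Type*} [Infinite S] [DecidableEq S]
    (n : ℕ) (hn : 1 ≤ n) (Sn : Finset S) (hSn : Sn.card = n)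
    (T : lp (fun _ : FreeGroup S => ℂ) 2 →L[ℂ] lp (fun _ : FreeGroup S => ℂ) 2)
    (L : FreeGroup S → (lp (fun _ : FreeGroup S => ℂ) 2 →L[ℂ] lp (fun _ : FreeGroup S => ℂ) 2))
    (hL : ∀ g x : FreeGroup S, L g (lp.single 2 x 1) = lp.single 2 (g * x) 1)
    (hT1 : ∀ (x : FreeGroup S) (l : S × Bool),
      x.toWord.getLast? = some l → l.1 ∈ Sn →
      T (lp.single 2 x 1) = lp.single 2 (FreeGroup.mk x.toWord.dropLast) 1)
    (hT0 : ∀ x : FreeGroup S,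
      (∀ l : S × Bool, x.toWord.getLast? = some l → l.1 ∉ Sn) →
      T (lp.single 2 x 1) = 0)
    (β : lp (fun _ : FreeGroup S => ℂ) 2 →L[ℂ] lp (fun _ : FreeGroup S => ℂ) 2)
    (hβ : ∀ g : FreeGroup S, β.comp (L g) = (L g).comp β) :
    (2 * n : ℝ) / (2 * Real.sqrt (2 * n - 1) + Real.sqrt (2 * n)) ≤ ‖T - β‖ ∧
      Real.sqrt (2 * n) / 3 <
        (2 * n : ℝ) / (2 * Real.sqrt (2 * n - 1) + Real.sqrt (2 * n)) := by
  classical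
  have hn' : (1:ℝ) ≤ (n:ℝ) := by exact_mod_cast hn
  set x : ℝ := Real.sqrt (2*n) with hx_def
  set y : ℝ := Real.sqrt (2*n - 1) with hy_def
  have hx2 : x * x = 2*(n:ℝ) := Real.mul_self_sqrt (by linarith)
  have hy2 : y * y = 2*(n:ℝ) - 1 := Real.mul_self_sqrt (by linarith)
  have hx0 : 0 < x := Real.sqrt_pos.mpr (by linarith)
  have hy0 : 0 ≤ y := Real.sqrt_nonneg _
  have hyx : y < x := Real.sqrt_lt_sqrt (by linarith) (by linarith)
  have hd0 : 0 < 2*y + x := by linarith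
  -- the operator bound
  set u₀ : lp (fun _ : FreeGroup S => ℂ) 2 := β (lp.single 2 (1 : FreeGroup S) 1) with hu₀
  have hT1e : T (lp.single 2 (1:FreeGroup S) 1) = 0 := by
    refine hT0 1 (fun l hl => ?_)
    rw [FreeGroup.toWord_one] at hl
    simp at hl
  have hu₀le : ‖u₀‖ ≤ ‖T - β‖ := by
    have he : (T - β) (lp.single 2 (1:FreeGroup S) 1) = -u₀ := by
      rw [ContinuousLinearMap.sub_apply, hT1e, hu₀, zero_sub]
    calc ‖u₀‖ = ‖(T - β) (lp.single 2 (1:FreeGroup S) 1)‖ := by rw [he, norm_neg]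
      _ ≤ ‖T - β‖ * ‖(lp.single 2 (1:FreeGroup S) (1:ℂ) :
            lp (fun _ : FreeGroup S => ℂ) 2)‖ := (T - β).le_opNorm _
      _ = ‖T - β‖ := by rw [delta_norm, mul_one]
  set f : lp (fun _ : FreeGroup S => ℂ) 2 := ∑ g ∈ ES Sn, lp.single 2 g (1:ℂ) with hf
  have hfnorm : ‖f‖ = x := norm_f hn hSn
  have hTg : ∀ g ∈ ES Sn, T (lp.single 2 g 1) = lp.single 2 (1:FreeGroup S) (1:ℂ) := by
    intro g hg
    obtain ⟨s, hs, b, rfl⟩ := mem_ES.mp hg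
    have hlast : (FreeGroup.mk [(s,b)]).toWord.getLast? = some (s,b) := by
      rw [toWord_gen]; rfl
    have := hT1 (FreeGroup.mk [(s,b)]) (s,b) hlast hs
    rw [this, toWord_gen, show ([(s,b)] : List (S × Bool)).dropLast = [] from rfl,
      ← FreeGroup.one_eq_mk]
  have hTf : T f = ((2*n : ℕ) : ℂ) • lp.single 2 (1:FreeGroup S) (1:ℂ) := by
    rw [hf, map_sum, Finset.sum_congr rfl hTg, Finset.sum_const, card_ES, hSn,
      Nat.cast_smul_eq_nsmul]
  have hTfnorm : ‖T f‖ = 2*(n:ℝ) := by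
    rw [hTf, norm_smul, delta_norm, mul_one]
    push_cast
    simp
  have hβf : β f = ∑ g ∈ ES Sn, (L g) u₀ := by
    rw [hf, map_sum]
    refine Finset.sum_congr rfl (fun g _ => ?_)
    have h1 : lp.single 2 g (1:ℂ) = L g (lp.single 2 (1:FreeGroup S) 1) := by
      rw [hL g 1, mul_one]
    rw [h1, hu₀]
    exact DFunLike.congr_fun (hβ g) (lp.single 2 (1:FreeGroup S) 1)
  have hwpt : ∀ z, (β f) z = ∑ g ∈ ES Sn, u₀ (g⁻¹ * z) := by
    intro z
    rw [hβf, coeFn_sum_apply]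
    exact Finset.sum_congr rfl (fun g _ => pointwise g (L g) (hL g) u₀ z)
  have hkest : ‖β f‖ ≤ 2*y*‖u₀‖ := kesten hn hSn u₀ (β f) hwpt
  have hmain : 2*(n:ℝ) ≤ ‖T - β‖ * (2*y + x) := by
    have hsplit : T f = (T - β) f + β f := by
      rw [ContinuousLinearMap.sub_apply]
      abel
    calc 2*(n:ℝ) = ‖T f‖ := hTfnorm.symm
      _ ≤ ‖(T - β) f‖ + ‖β f‖ := by rw [hsplit]; exact norm_add_le _ _
      _ ≤ ‖T - β‖ * x + 2*y*‖T - β‖ := by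
          refine add_le_add ?_ ?_
          · have := (T - β).le_opNorm f
            rwa [hfnorm] at this
          · refine hkest.trans ?_
            exact mul_le_mul_of_nonneg_left hu₀le (by positivity)
      _ = ‖T - β‖ * (2*y + x) := by ring
  constructor
  · rw [div_le_iff₀ hd0]
    calc (2*(n:ℝ)) ≤ ‖T - β‖ * (2*y + x) := hmain
      _ = ‖T - β‖ * (2*y + x) := rfl
  · rw [div_lt_div_iff₀ (by norm_num : (0:ℝ) < 3) hd0]
    have hxy : x * y < x * x := by
      exact mul_lt_mul_of_pos_left hyx hx0
    nlinarith
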